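/- Hierarchization with factor k: Let U be a set, σ = (σ₁,…,σ_T) ∈ U^T a request sequence, and 0 ≤ w₁ ≤ w₂ ≤ ⋯ ≤ w_k nondecreasing nonnegative real weights. For a k-level service pattern 𝓘 define cost_w(𝓘) = Σ_{ℓ=1}^k w_ℓ · |𝓘^ℓ|, where |𝓘^ℓ| is the number of intervals in level ℓ. If 𝓘 is a (not necessarily hierarchical) k-level service pattern over {1,…,T} that is feasible with respect to σ, then there exists a hierarchical k-level service pattern 𝓘' over {1,…,T} that is feasible with respect to σ and satisfies cost_w(𝓘') ≤ k · cost_w(𝓘). -/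

import Mathlib

/-- A `k`-level service pattern over times `{1,…,T}` is encoded by `start ℓ t`, which says
that a new interval of level `ℓ` begins at time `t`; each level starts an interval at
time `1`. -/
def IsPattern (k : ℕ) (start : ℕ → ℕ → Prop) : Prop :=
  ∀ ℓ, 1 ≤ ℓ → ℓ ≤ k → start ℓ 1

/-- A `k`-level service pattern over `{1,…,T}` is hierarchical if each level refines the
next one. -/
def Hierarchical (k T : ℕ) (start : ℕ → ℕ → Prop) : Prop :=
  ∀ ℓ t, 1 ≤ ℓ → ℓ < k → 1 ≤ t → t ≤ T → start (ℓ + 1) t → start ℓ t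

/-- A labeling of a `k`-level pattern over `{1,…,T}` assigns a point of `U` to each level
at each time, constant on each interval of each level. -/
def IsLabeling {U : Type*} (k T : ℕ) (start : ℕ → ℕ → Prop) (lab : ℕ → ℕ → U) : Prop :=
  ∀ ℓ t, 1 ≤ ℓ → ℓ ≤ k → 2 ≤ t → t ≤ T → ¬ start ℓ t → lab ℓ t = lab ℓ (t - 1)

/-- A pattern is feasible w.r.t. the request sequence `σ₁,…,σ_T` if it admits a labeling
such that at every time `t ∈ {1,…,T}` the interval of some level containing `t` is labeled
`σ_t`. -/
def FeasiblePattern (U : Type*) (k T : ℕ) (start : ℕ → ℕ → Prop) (σ : ℕ → U) : Prop :=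
  ∃ lab : ℕ → ℕ → U, IsLabeling k T start lab ∧
    ∀ t, 1 ≤ t → t ≤ T → ∃ j, 1 ≤ j ∧ j ≤ k ∧ lab j t = σ t

/-- `cost_w(𝓘) = Σ_{ℓ=1}^k w_ℓ · |𝓘^ℓ|`, where `|𝓘^ℓ|` is the number of intervals of level
`ℓ`, i.e. the number of times `t ∈ {1,…,T}` at which an interval of level `ℓ` starts. -/
noncomputable def patternCost (k T : ℕ) (w : ℕ → ℝ) (start : ℕ → ℕ → Prop) : ℝ :=
  ∑ ℓ ∈ Finset.Icc 1 k, w ℓ * ({t : ℕ | 1 ≤ t ∧ t ≤ T ∧ start ℓ t}.ncard : ℝ)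

/-- Hierarchization with factor `k`: for nondecreasing nonnegative weights
`0 ≤ w₁ ≤ ⋯ ≤ w_k`, every (not necessarily hierarchical) `k`-level service pattern over
`{1,…,T}` feasible w.r.t. `σ` admits a hierarchical `k`-level service pattern over
`{1,…,T}` feasible w.r.t. `σ` of cost at most `k` times larger. -/
lemma ncard_biUnion_le' {α β : Type*} (s : Finset α) (f : α → Set β)
    (hf : ∀ i ∈ s, (f i).Finite) :
    (⋃ i ∈ s, f i).ncard ≤ ∑ i ∈ s, (f i).ncard := by
  classical
  induction s using Finset.induction with
  | empty => simp
  | insert a s hx ih =>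
    rw [Finset.sum_insert hx]
    have : (⋃ i ∈ insert a s, f i) = f a ∪ ⋃ i ∈ s, f i := by
      simp [Set.biUnion_insert]
    rw [this]
    calc (f a ∪ ⋃ i ∈ s, f i).ncard ≤ (f a).ncard + (⋃ i ∈ s, f i).ncard :=
          Set.ncard_union_le _ _
      _ ≤ (f a).ncard + ∑ i ∈ s, (f i).ncard := by
          gcongr
          exact ih (fun i hi => hf i (Finset.mem_insert_of_mem hi))

theorem hierarchization {U : Type*} (k : ℕ) (hk : 1 ≤ k) (T : ℕ) (hT : 1 ≤ T)
    (σ : ℕ → U) (w : ℕ → ℝ)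
    (hw0 : ∀ j, 1 ≤ j → j ≤ k → 0 ≤ w j)
    (hwmono : ∀ j, 1 ≤ j → j < k → w j ≤ w (j + 1))
    (start : ℕ → ℕ → Prop) (hpat : IsPattern k start)
    (hfeas : FeasiblePattern U k T start σ) :
    ∃ start' : ℕ → ℕ → Prop, IsPattern k start' ∧ Hierarchical k T start' ∧
      FeasiblePattern U k T start' σ ∧
      patternCost k T w start' ≤ k * patternCost k T w start := by
  classical
  -- weight monotonicity on [1,k]
  have wmono : ∀ ℓ j, 1 ≤ ℓ → ℓ ≤ j → j ≤ k → w ℓ ≤ w j := by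
    intro ℓ j hℓ hlj hjk
    induction j with
    | zero => omega
    | succ n ih =>
      rcases Nat.lt_or_ge ℓ (n+1) with h | h
      · have h1 : ℓ ≤ n := by omega
        have h2 : n ≤ k := by omega
        have hn1 : 1 ≤ n := by omega
        exact le_trans (ih h1 h2) (hwmono n hn1 (by omega))
      · have : ℓ = n + 1 := by omega
        subst this; rfl
  set start' : ℕ → ℕ → Prop := fun ℓ t => ∃ j, ℓ ≤ j ∧ j ≤ k ∧ start j t with hs'
  refine ⟨start', ?_, ?_, ?_, ?_⟩
  · intro ℓ h1 h2; exact ⟨ℓ, le_refl _, h2, hpat ℓ h1 h2⟩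
  · rintro ℓ t h1 h2 h3 h4 ⟨j, hj1, hj2, hj3⟩
    exact ⟨j, by omega, hj2, hj3⟩
  · obtain ⟨lab, hlab, hcov⟩ := hfeas
    refine ⟨lab, ?_, hcov⟩
    intro ℓ t h1 h2 h3 h4 hns
    exact hlab ℓ t h1 h2 h3 h4 (fun hs => hns ⟨ℓ, le_refl _, h2, hs⟩)
  · -- cost bound
    set S : ℕ → Set ℕ := fun j => {t : ℕ | 1 ≤ t ∧ t ≤ T ∧ start j t} with hS
    have hSfin : ∀ j, (S j).Finite := by
      intro j
      apply Set.Finite.subset (Set.finite_Icc 1 T)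
      intro t ht; exact ⟨ht.1, ht.2.1⟩
    have key : ∀ ℓ ∈ Finset.Icc 1 k,
        w ℓ * ({t : ℕ | 1 ≤ t ∧ t ≤ T ∧ start' ℓ t}.ncard : ℝ)
          ≤ patternCost k T w start := by
      intro ℓ hℓ
      rw [Finset.mem_Icc] at hℓ
      have hunion : {t : ℕ | 1 ≤ t ∧ t ≤ T ∧ start' ℓ t} = ⋃ j ∈ Finset.Icc ℓ k, S j := by
        ext t
        simp only [Set.mem_setOf_eq, Set.mem_iUnion, Finset.mem_Icc, hS, hs']
        constructor
        · rintro ⟨h1, h2, j, hj1, hj2, hj3⟩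
          exact ⟨j, ⟨hj1, hj2⟩, h1, h2, hj3⟩
        · rintro ⟨j, ⟨hj1, hj2⟩, h1, h2, hj3⟩
          exact ⟨h1, h2, j, hj1, hj2, hj3⟩
      have hcard : ({t : ℕ | 1 ≤ t ∧ t ≤ T ∧ start' ℓ t}.ncard : ℝ)
          ≤ ∑ j ∈ Finset.Icc ℓ k, ((S j).ncard : ℝ) := by
        rw [hunion]
        push_cast
        exact_mod_cast ncard_biUnion_le' _ _ (fun j _ => hSfin j)
      calc w ℓ * ({t : ℕ | 1 ≤ t ∧ t ≤ T ∧ start' ℓ t}.ncard : ℝ)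
          ≤ w ℓ * ∑ j ∈ Finset.Icc ℓ k, ((S j).ncard : ℝ) := by
            apply mul_le_mul_of_nonneg_left hcard (hw0 ℓ hℓ.1 hℓ.2)
        _ = ∑ j ∈ Finset.Icc ℓ k, w ℓ * ((S j).ncard : ℝ) := Finset.mul_sum _ _ _
        _ ≤ ∑ j ∈ Finset.Icc ℓ k, w j * ((S j).ncard : ℝ) := by
            apply Finset.sum_le_sum
            intro j hj
            rw [Finset.mem_Icc] at hj
            apply mul_le_mul_of_nonneg_right (wmono ℓ j hℓ.1 hj.1 hj.2)
            positivity
        _ ≤ ∑ j ∈ Finset.Icc 1 k, w j * ((S j).ncard : ℝ) := by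
            apply Finset.sum_le_sum_of_subset_of_nonneg
            · apply Finset.Icc_subset_Icc_left hℓ.1
            · intro j hj _
              rw [Finset.mem_Icc] at hj
              have := hw0 j hj.1 hj.2
              positivity
        _ = patternCost k T w start := rfl
    calc patternCost k T w start'
        = ∑ ℓ ∈ Finset.Icc 1 k,
            w ℓ * ({t : ℕ | 1 ≤ t ∧ t ≤ T ∧ start' ℓ t}.ncard : ℝ) := rfl
      _ ≤ ∑ _ℓ ∈ Finset.Icc 1 k, patternCost k T w start := Finset.sum_le_sum key
      _ = k * patternCost k T w start := by
          rw [Finset.sum_const, Nat.card_Icc]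
          simp [nsmul_eq_mul]
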